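/- Let (Ω, 𝒜, μ) be a probability space, T : Ω → Ω an invertible, ergodic, μ-preserving transformation, and c : Ω → ℝ a measurable function with c > 0 μ-a.e.; set c̄ = c + c∘T^{−1}. Assume that ∫_Ω c dμ = +∞ or ∫_Ω (1/c) dμ = +∞ (or both). For ω ∈ Ω define f_ω : ℤ → ℝ by f_ω(0) = 0, f_ω(m) = ∑_{ℓ=0}^{m−1} (1/c(T^ℓω)) ∑_{k=1}^{ℓ} c̄(T^kω) for m ≥ 1, and f_ω(m) = ∑_{ℓ=1}^{−m} (1/c(T^{−ℓ}ω)) ∑_{k=0}^{ℓ−1} c̄(T^{−k}ω) for m ≤ −1. Then for μ-almost every ω, f_ω(m)/m² tends to +∞ as m → +∞ and as m → −∞. -/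

import Mathlib

set_option linter.unusedSectionVars false

open Finset Filter MeasureTheory Topology
open scoped ENNReal NNReal

namespace ET3

variable {Ω : Type*} [MeasurableSpace Ω]

/-- Birkhoff sums. -/
noncomputable def bS (τ : Ω → Ω) (g : Ω → ℝ) (n : ℕ) (ω : Ω) : ℝ :=
  ∑ k ∈ Finset.range n, g (τ^[k] ω)

lemma bS_succ (τ : Ω → Ω) (g : Ω → ℝ) (n : ℕ) (ω : Ω) :
    bS τ g (n + 1) ω = g ω + bS τ g n (τ ω) := by
  simp only [bS, Finset.sum_range_succ']
  simp [Function.iterate_succ_apply, add_comm]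

lemma bS_measurable {τ : Ω → Ω} (hτ : Measurable τ) {g : Ω → ℝ} (hg : Measurable g) (n : ℕ) :
    Measurable (bS τ g n) :=
  Finset.measurable_sum _ fun k _ => hg.comp (hτ.iterate k)

lemma abs_bS_le {τ : Ω → Ω} {g : Ω → ℝ} {C : ℝ} (hgb : ∀ ω, |g ω| ≤ C) (n : ℕ) (ω : Ω) :
    |bS τ g n ω| ≤ n * C := by
  calc |bS τ g n ω| ≤ ∑ k ∈ Finset.range n, |g (τ^[k] ω)| := Finset.abs_sum_le_sum_abs _ _
  _ ≤ ∑ _k ∈ Finset.range n, C := Finset.sum_le_sum fun k _ => hgb _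
  _ = n * C := by simp [mul_comm]

/-- Maximal function `max_{0 ≤ n ≤ N} S_n`. -/
noncomputable def bM (τ : Ω → Ω) (g : Ω → ℝ) : ℕ → Ω → ℝ
  | 0, _ => 0
  | (N + 1), ω => max (bM τ g N ω) (bS τ g (N + 1) ω)

lemma bM_nonneg (τ : Ω → Ω) (g : Ω → ℝ) (N : ℕ) (ω : Ω) : 0 ≤ bM τ g N ω := by
  induction N with
  | zero => simp [bM]
  | succ N ih => exact le_trans ih (le_max_left _ _)

lemma bM_mono (τ : Ω → Ω) (g : Ω → ℝ) {N N' : ℕ} (h : N ≤ N') (ω : Ω) :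
    bM τ g N ω ≤ bM τ g N' ω := by
  induction N' with
  | zero => simp_all
  | succ N' ih =>
    rcases Nat.lt_or_ge N (N' + 1) with h' | h'
    · exact le_trans (ih (Nat.lt_succ_iff.mp h')) (le_max_left _ _)
    · have : N = N' + 1 := le_antisymm h h'
      subst this; rfl

lemma bS_le_bM (τ : Ω → Ω) (g : Ω → ℝ) {n N : ℕ} (h : n ≤ N) (ω : Ω) :
    bS τ g n ω ≤ bM τ g N ω := by
  induction N with
  | zero => interval_cases n <;> simp [bS, bM]
  | succ N ih =>
    rcases Nat.lt_or_ge n (N + 1) with h' | h'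
    · exact le_trans (ih (Nat.lt_succ_iff.mp h')) (le_max_left _ _)
    · have : n = N + 1 := le_antisymm h h'
      subst this; exact le_max_right _ _

lemma bM_measurable {τ : Ω → Ω} (hτ : Measurable τ) {g : Ω → ℝ} (hg : Measurable g) (N : ℕ) :
    Measurable (bM τ g N) := by
  induction N with
  | zero => exact measurable_const
  | succ N ih => exact Measurable.max ih (bS_measurable hτ hg _)

lemma bM_le {τ : Ω → Ω} {g : Ω → ℝ} {C : ℝ} (hgb : ∀ ω, |g ω| ≤ C) (N : ℕ) (ω : Ω) :
    bM τ g N ω ≤ N * C := by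
  induction N with
  | zero => simp [bM]
  | succ N ih =>
    refine max_le (le_trans ih ?_) (le_trans (le_abs_self _) (abs_bS_le hgb _ _)) 
    have hC : 0 ≤ C := le_trans (abs_nonneg _) (hgb ω)
    have : (N : ℝ) ≤ (N : ℝ) + 1 := by linarith
    push_cast
    nlinarith

/-- Key inequality for Garsia's proof. -/
lemma bM_key (τ : Ω → Ω) (g : Ω → ℝ) (N : ℕ) (ω : Ω) :
    bM τ g N ω ≤ max 0 (g ω + bM τ g N (τ ω)) := by
  induction N with
  | zero => simp [bM]
  | succ N ih =>
    refine max_le ?_ ?_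
    · exact le_trans ih (max_le_max le_rfl (by
        have := bM_mono τ g (Nat.le_succ N) (τ ω); linarith))
    · refine le_trans ?_ (le_max_right _ _)
      rw [bS_succ]
      have h2 := bS_le_bM τ g (Nat.le_succ N) (τ ω)
      linarith

lemma integrable_of_bound {h : Ω → ℝ} {μ : Measure Ω} [IsFiniteMeasure μ]
    (hm : Measurable h) (C : ℝ) (hb : ∀ ω, |h ω| ≤ C) : Integrable h μ :=
  (integrable_const C).mono' hm.aestronglyMeasurable (ae_of_all _ fun ω => by
    simpa [Real.norm_eq_abs] using hb ω)

/-- Maximal ergodic theorem (Garsia). -/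
lemma maximal {τ : Ω → Ω} {μ : Measure Ω} [IsProbabilityMeasure μ]
    (hτ : MeasurePreserving τ μ μ) {g : Ω → ℝ} (hg : Measurable g)
    (C : ℝ) (hgb : ∀ ω, |g ω| ≤ C) (N : ℕ) :
    0 ≤ ∫ ω in {ω | 0 < bM τ g N ω}, g ω ∂μ := by
  set E := {ω | 0 < bM τ g N ω} with hE
  have hEm : MeasurableSet E := measurableSet_lt measurable_const (bM_measurable hτ.measurable hg N)
  have hMint : Integrable (bM τ g N) μ :=
    integrable_of_bound (bM_measurable hτ.measurable hg N) (N * C)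
      (fun ω => by rw [abs_of_nonneg (bM_nonneg τ g N ω)]; exact bM_le hgb N ω)
  have hMτint : Integrable (fun ω => bM τ g N (τ ω)) μ :=
    integrable_of_bound ((bM_measurable hτ.measurable hg N).comp hτ.measurable) (N * C)
      (fun ω => by rw [abs_of_nonneg (bM_nonneg τ g N (τ ω))]; exact bM_le hgb N (τ ω))
  have hgint : Integrable g μ := integrable_of_bound hg C hgb
  -- pointwise inequality on E
  have hpt : ∀ ω ∈ E, bM τ g N ω - bM τ g N (τ ω) ≤ g ω := by
    intro ω hω
    have hkey := bM_key τ g N ω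
    rcases le_max_iff.mp hkey with h | h
    · exact absurd (lt_of_lt_of_le hω h) (lt_irrefl _)
    · linarith
  have h1 : ∫ ω in E, (bM τ g N ω - bM τ g N (τ ω)) ∂μ ≤ ∫ ω in E, g ω ∂μ :=
    setIntegral_mono_on ((hMint.sub hMτint).integrableOn) hgint.integrableOn hEm hpt
  have h2 : ∫ ω in E, (bM τ g N ω - bM τ g N (τ ω)) ∂μ
      = ∫ ω in E, bM τ g N ω ∂μ - ∫ ω in E, bM τ g N (τ ω) ∂μ :=
    integral_sub hMint.integrableOn hMτint.integrableOn
  have h3 : ∫ ω in E, bM τ g N ω ∂μ = ∫ ω, bM τ g N ω ∂μ := by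
    have h0 : ∫ ω in Eᶜ, bM τ g N ω ∂μ = 0 :=
      setIntegral_eq_zero_of_forall_eq_zero fun ω hω =>
        le_antisymm (not_lt.mp hω) (bM_nonneg τ g N ω)
    rw [← integral_add_compl hEm hMint, h0, add_zero]
  have h4 : ∫ ω in E, bM τ g N (τ ω) ∂μ ≤ ∫ ω, bM τ g N (τ ω) ∂μ :=
    setIntegral_le_integral hMτint (ae_of_all _ fun ω => bM_nonneg τ g N (τ ω))
  have h5 : ∫ ω, bM τ g N (τ ω) ∂μ = ∫ ω, bM τ g N ω ∂μ := by
    rw [← integral_map hτ.measurable.aemeasurable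
      (bM_measurable hτ.measurable hg N).aestronglyMeasurable, hτ.map_eq]
  linarith

lemma freq_up {a b C : ℝ} (hab : a < b) {u w : ℕ → ℝ} (hu : ∃ᶠ n in atTop, b * n < u n)
    (hw : ∀ n, u n - C ≤ w (n + 1)) : ∃ᶠ n in atTop, a * n < w n := by
  obtain ⟨N₀, hN₀⟩ := exists_nat_gt ((a + C) / (b - a))
  have hba : (0:ℝ) < b - a := by linarith
  have hN₀' : a + C < (b - a) * N₀ := by
    rw [div_lt_iff₀ hba] at hN₀; linarith
  rw [frequently_atTop] at hu ⊢
  intro N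
  obtain ⟨n, hn, hlt⟩ := hu (max N N₀)
  refine ⟨n + 1, le_trans (le_trans (le_max_left _ _) hn) (Nat.le_succ n), ?_⟩
  have hn₀ : (N₀ : ℝ) ≤ n := Nat.cast_le.mpr (le_trans (le_max_right _ _) hn)
  have : (b - a) * N₀ ≤ (b - a) * n := by nlinarith
  have hw' := hw n
  push_cast
  nlinarith

lemma freq_down {a b C : ℝ} (hab : a < b) {u w : ℕ → ℝ} (hu : ∃ᶠ n in atTop, b * n < u n)
    (hw : ∀ n, u (n + 1) - C ≤ w n) : ∃ᶠ n in atTop, a * n < w n := by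
  obtain ⟨N₀, hN₀⟩ := exists_nat_gt ((C - b) / (b - a))
  have hba : (0:ℝ) < b - a := by linarith
  have hN₀' : C - b < (b - a) * N₀ := by
    rw [div_lt_iff₀ hba] at hN₀; linarith
  rw [frequently_atTop] at hu ⊢
  intro N
  obtain ⟨n, hn, hlt⟩ := hu (max (N + 1) (N₀ + 1))
  have hn1 : 1 ≤ n := le_trans (le_trans (by omega) (le_max_right _ _)) hn
  refine ⟨n - 1, by omega, ?_⟩
  have heq : n - 1 + 1 = n := by omega
  have hw' := hw (n - 1)
  rw [heq] at hw'
  have hn₀ : (N₀ : ℝ) ≤ (n - 1 : ℕ) := by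
    have : N₀ + 1 ≤ n := le_trans (le_max_right _ _) hn
    exact_mod_cast by omega
  have : (b - a) * N₀ ≤ (b - a) * (n - 1 : ℕ) := by nlinarith
  have hcast : ((n : ℕ) : ℝ) = ((n - 1 : ℕ) : ℝ) + 1 := by exact_mod_cast congrArg Nat.cast heq.symm
  rw [hcast] at hlt
  nlinarith

lemma ae_eventually_birkhoff_le {τ : Ω → Ω} {μ : Measure Ω} [IsProbabilityMeasure μ]
    (hτ : Ergodic τ μ) {g : Ω → ℝ} (hg : Measurable g)
    (C : ℝ) (hgb : ∀ ω, |g ω| ≤ C) {α : ℝ} (hα : ∫ ω, g ω ∂μ < α) :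
    ∀ᵐ ω ∂μ, ∀ᶠ n in atTop, bS τ g n ω ≤ α * n := by
  classical
  set P : Ω → Prop := fun ω => ∀ β : ℚ, (β : ℝ) < α → ∃ᶠ n in atTop, (β : ℝ) * n < bS τ g n ω
    with hP
  set D : Set Ω := {ω | P ω} with hD
  have hDm : MeasurableSet D := by
    have : D = ⋂ (β : ℚ), ⋂ (_ : (β : ℝ) < α), ⋂ (N : ℕ), ⋃ (n : ℕ), ⋃ (_ : N ≤ n),
        {ω | (β : ℝ) * n < bS τ g n ω} := by
      ext ω
      simp only [hD, hP, Set.mem_setOf_eq, Set.mem_iInter, Set.mem_iUnion, frequently_atTop]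
      constructor
      · rintro h β hβ N; obtain ⟨n, hn, h'⟩ := h β hβ N; exact ⟨n, hn, h'⟩
      · rintro h β hβ N; obtain ⟨n, hn, h'⟩ := h β hβ N; exact ⟨n, hn, h'⟩
    rw [this]
    exact MeasurableSet.iInter fun β => MeasurableSet.iInter fun _ =>
      MeasurableSet.iInter fun N => MeasurableSet.iUnion fun n => MeasurableSet.iUnion fun _ =>
        measurableSet_lt measurable_const (bS_measurable hτ.toMeasurePreserving.measurable hg n)
  have hinv : τ ⁻¹' D = D := by
    ext ω
    simp only [Set.mem_preimage, hD, Set.mem_setOf_eq, hP]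
    constructor
    · intro h β hβ
      obtain ⟨β', h1, h2⟩ := exists_rat_btwn hβ
      exact freq_up (C := C) (by exact_mod_cast h1) (h β' h2)
        (fun n => by rw [bS_succ]; linarith [(abs_le.1 (hgb ω)).1])
    · intro h β hβ
      obtain ⟨β', h1, h2⟩ := exists_rat_btwn hβ
      exact freq_down (C := C) (by exact_mod_cast h1) (h β' h2)
        (fun n => by rw [bS_succ]; linarith [(abs_le.1 (hgb ω)).2])
  rcases hτ.ae_empty_or_univ hDm hinv with h | h
  · have hD0 : μ D = 0 := by simpa using measure_congr h
    have hae : ∀ᵐ ω ∂μ, ¬ P ω := by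
      rw [ae_iff]
      have : {ω | ¬ ¬ P ω} = D := by ext ω; simp [hD]
      rwa [this]
    filter_upwards [hae] with ω hω
    have hω' : ∃ β : ℚ, (β : ℝ) < α ∧ ∀ᶠ n in atTop, bS τ g n ω ≤ (β : ℝ) * n := by
      by_contra hcon
      push_neg at hcon
      refine hω fun β hβ => ?_
      have h2 := hcon β hβ
      exact h2
    obtain ⟨β, hβ, hev⟩ := hω'
    filter_upwards [hev] with n hn
    calc bS τ g n ω ≤ (β : ℝ) * n := hn
    _ ≤ α * n := mul_le_mul_of_nonneg_right hβ.le (Nat.cast_nonneg n)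
  · exfalso
    obtain ⟨β₀, hβ₀l, hβ₀r⟩ := exists_rat_btwn hα
    set h' : Ω → ℝ := fun ω => g ω - (β₀ : ℝ) with hh'
    have hh'm : Measurable h' := hg.sub measurable_const
    have hh'b : ∀ ω, |h' ω| ≤ C + |(β₀ : ℝ)| := fun ω => abs_le.2
      ⟨by simp only [hh']; linarith [(abs_le.1 (hgb ω)).1, le_abs_self ((β₀ : ℝ))],
       by simp only [hh']; linarith [(abs_le.1 (hgb ω)).2, neg_abs_le ((β₀ : ℝ))]⟩
    have hS' : ∀ (n : ℕ) (ω : Ω), bS τ h' n ω = bS τ g n ω - (β₀ : ℝ) * n := by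
      intro n ω
      simp [bS, hh', Finset.sum_sub_distrib, mul_comm]
    set E : ℕ → Set Ω := fun N => {ω | 0 < bM τ h' N ω} with hE
    have hEm : ∀ N, MeasurableSet (E N) := fun N =>
      measurableSet_lt measurable_const (bM_measurable hτ.toMeasurePreserving.measurable hh'm N)
    have hEmono : Monotone E := fun N N' hNN' ω hω => lt_of_lt_of_le hω (bM_mono τ h' hNN' ω)
    have hDE : D ⊆ ⋃ N, E N := by
      intro ω hω
      obtain ⟨n, hn, hlt⟩ := frequently_atTop.1 (hω β₀ hβ₀r) 1
      refine Set.mem_iUnion.2 ⟨n, lt_of_lt_of_le ?_ (bS_le_bM τ h' le_rfl ω)⟩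
      rw [hS']; linarith
    have hU : μ (⋃ N, E N)ᶜ = 0 := by
      have hD1 : μ D = 1 := by simpa using measure_congr h
      have hDc : μ Dᶜ = 0 := (prob_compl_eq_zero_iff hDm).2 hD1
      exact measure_mono_null (Set.compl_subset_compl.2 hDE) hDc
    have hint' : Integrable h' μ := integrable_of_bound hh'm _ hh'b
    have htend := tendsto_setIntegral_of_monotone hEm hEmono hint'.integrableOn
    have hlim : 0 ≤ ∫ ω in ⋃ N, E N, h' ω ∂μ :=
      ge_of_tendsto htend (Eventually.of_forall fun N =>
        maximal hτ.toMeasurePreserving hh'm _ hh'b N)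
    have h9 := integral_add_compl (MeasurableSet.iUnion hEm) hint'
    have h10 : ∫ ω in (⋃ N, E N)ᶜ, h' ω ∂μ = 0 := by
      rw [Measure.restrict_eq_zero.2 hU]; exact integral_zero_measure _
    have h11 : ∫ ω, h' ω ∂μ = ∫ ω, g ω ∂μ - (β₀ : ℝ) := by
      rw [hh']
      rw [integral_sub (integrable_of_bound hg C hgb) (integrable_const _), integral_const]
      simp
    rw [h10, add_zero, h11] at h9
    rw [h9] at hlim
    linarith

/-- Pointwise ergodic theorem for bounded measurable functions. -/
lemma ae_tendsto_birkhoff {τ : Ω → Ω} {μ : Measure Ω} [IsProbabilityMeasure μ]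
    (hτ : Ergodic τ μ) {g : Ω → ℝ} (hg : Measurable g)
    (C : ℝ) (hgb : ∀ ω, |g ω| ≤ C) :
    ∀ᵐ ω ∂μ, Tendsto (fun n : ℕ => bS τ g n ω / n) atTop (𝓝 (∫ ω, g ω ∂μ)) := by
  have H1 : ∀ᵐ ω ∂μ, ∀ q : ℚ, ∫ ω, g ω ∂μ < (q : ℝ) →
      ∀ᶠ n in atTop, bS τ g n ω ≤ (q : ℝ) * n := by
    rw [ae_all_iff]
    intro q
    by_cases hq : ∫ ω, g ω ∂μ < (q : ℝ)
    · filter_upwards [ae_eventually_birkhoff_le hτ hg C hgb hq] with ω h _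
      exact h
    · filter_upwards with ω h; exact absurd h hq
  have H2 : ∀ᵐ ω ∂μ, ∀ q : ℚ, (q : ℝ) < ∫ ω, g ω ∂μ →
      ∀ᶠ n in atTop, (q : ℝ) * n ≤ bS τ g n ω := by
    rw [ae_all_iff]
    intro q
    by_cases hq : (q : ℝ) < ∫ ω, g ω ∂μ
    · have hneg : ∫ ω, (fun x => - g x) ω ∂μ < ((-q : ℚ) : ℝ) := by
        rw [integral_neg]; push_cast; linarith
      filter_upwards [ae_eventually_birkhoff_le hτ hg.neg C
          (fun ω => by rw [Pi.neg_apply, abs_neg]; exact hgb ω) hneg] with ω h _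
      filter_upwards [h] with n hn
      have hbSneg : bS τ (fun x => - g x) n ω = - bS τ g n ω := by
        simp [bS]
      rw [show bS τ (-g) n ω = - bS τ g n ω from hbSneg] at hn
      push_cast at hn
      linarith
    · filter_upwards with ω h; exact absurd h hq
  filter_upwards [H1, H2] with ω h1 h2
  rw [tendsto_order]
  constructor
  · intro a ha
    obtain ⟨q, hq1, hq2⟩ := exists_rat_btwn ha
    filter_upwards [h2 q hq2, eventually_ge_atTop 1] with n hn hn1
    have hn0 : (0 : ℝ) < n := by exact_mod_cast hn1
    have : (q : ℝ) ≤ bS τ g n ω / n := (le_div_iff₀ hn0).2 hn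
    linarith
  · intro a ha
    obtain ⟨q, hq1, hq2⟩ := exists_rat_btwn ha
    filter_upwards [h1 q hq1, eventually_ge_atTop 1] with n hn hn1
    have hn0 : (0 : ℝ) < n := by exact_mod_cast hn1
    have : bS τ g n ω / n ≤ q := (div_le_iff₀ hn0).2 hn
    linarith

lemma ergodic_symm (T : Ω ≃ᵐ Ω) {μ : Measure Ω} (hT : Ergodic T μ) : Ergodic T.symm μ := by
  refine ⟨MeasurePreserving.symm T hT.toMeasurePreserving, ⟨fun s hs hinv => ?_⟩⟩
  refine hT.toPreErgodic.aeconst_set hs ?_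
  have h2 : T ⁻¹' (T.symm ⁻¹' s) = s := by
    ext x; simp
  conv_rhs => rw [← h2, hinv]

lemma ae_comp {f : Ω → Ω} {μ : Measure Ω} (hf : MeasurePreserving f μ μ) {p : Ω → Prop}
    (hp : MeasurableSet {x | p x}) (h : ∀ᵐ x ∂μ, p x) : ∀ᵐ x ∂μ, p (f x) := by
  rw [← hf.map_eq] at h
  exact (MeasureTheory.ae_map_iff hf.measurable.aemeasurable hp).1 h

/-- truncation -/
noncomputable def clamp (K : ℕ) (g : Ω → ℝ) : Ω → ℝ := fun ω => max 0 (min (g ω) K)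

lemma clamp_nonneg (K : ℕ) (g : Ω → ℝ) (ω : Ω) : 0 ≤ clamp K g ω := le_max_left _ _

lemma clamp_le_nat (K : ℕ) (g : Ω → ℝ) (ω : Ω) : clamp K g ω ≤ K :=
  max_le (Nat.cast_nonneg K) (min_le_right _ _)

lemma clamp_abs (K : ℕ) (g : Ω → ℝ) (ω : Ω) : |clamp K g ω| ≤ K := by
  rw [abs_of_nonneg (clamp_nonneg K g ω)]; exact clamp_le_nat K g ω

lemma clamp_le (K : ℕ) {g : Ω → ℝ} {ω : Ω} (h : 0 ≤ g ω) : clamp K g ω ≤ g ω :=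
  max_le h (min_le_left _ _)

lemma clamp_measurable (K : ℕ) {g : Ω → ℝ} (hg : Measurable g) : Measurable (clamp K g) :=
  measurable_const.max (hg.min measurable_const)

lemma integral_clamp_eq {μ : Measure Ω} [IsProbabilityMeasure μ] (K : ℕ) {g : Ω → ℝ}
    (hg : Measurable g) :
    ∫ ω, clamp K g ω ∂μ = (∫⁻ ω, ENNReal.ofReal (clamp K g ω) ∂μ).toReal := by
  rw [integral_eq_lintegral_of_nonneg_ae (ae_of_all _ (clamp_nonneg K g))
    (clamp_measurable K hg).aestronglyMeasurable]

lemma lintegral_clamp_lt_top {μ : Measure Ω} [IsProbabilityMeasure μ] (K : ℕ) (g : Ω → ℝ) :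
    ∫⁻ ω, ENNReal.ofReal (clamp K g ω) ∂μ < ⊤ := by
  calc ∫⁻ ω, ENNReal.ofReal (clamp K g ω) ∂μ ≤ ∫⁻ _x, (K : ℝ≥0∞) ∂μ := by
        refine lintegral_mono fun ω => ?_
        calc ENNReal.ofReal (clamp K g ω) ≤ ENNReal.ofReal (K : ℝ) :=
              ENNReal.ofReal_le_ofReal (clamp_le_nat K g ω)
        _ ≤ (K : ℝ≥0∞) := by simp
  _ = (K : ℝ≥0∞) := by simp
  _ < ⊤ := by simp [ENNReal.natCast_lt_top]

lemma pos_integral_clamp {μ : Measure Ω} [IsProbabilityMeasure μ] {g : Ω → ℝ}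
    (hg : Measurable g) (hpos : ∀ᵐ ω ∂μ, 0 < g ω) : 0 < ∫ ω, clamp 1 g ω ∂μ := by
  rw [integral_clamp_eq 1 hg]
  have hmeas : Measurable fun ω => ENNReal.ofReal (clamp 1 g ω) :=
    (clamp_measurable 1 hg).ennreal_ofReal
  have hsupp : 0 < ∫⁻ ω, ENNReal.ofReal (clamp 1 g ω) ∂μ := by
    rw [lintegral_pos_iff_support hmeas]
    have hsub : {ω | 0 < g ω} ⊆ Function.support fun ω => ENNReal.ofReal (clamp 1 g ω) := by
      intro ω hω
      have h1 : 0 < clamp 1 g ω := by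
        have : (0:ℝ) < min (g ω) ((1:ℕ):ℝ) := lt_min hω (by norm_num)
        exact lt_of_lt_of_le this (le_max_right _ _)
      simp only [Function.mem_support, ne_eq, ENNReal.ofReal_eq_zero, not_le]
      exact h1
    have h2 : μ {ω | 0 < g ω} = 1 := by
      have hms : MeasurableSet {ω | 0 < g ω} := measurableSet_lt measurable_const hg
      refine (prob_compl_eq_zero_iff hms).1 ?_
      rw [ae_iff] at hpos
      have : {ω | 0 < g ω}ᶜ = {ω | ¬ 0 < g ω} := by ext x; simp
      rw [this]; exact hpos
    calc (0 : ℝ≥0∞) < 1 := by norm_num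
    _ = μ {ω | 0 < g ω} := h2.symm
    _ ≤ μ (Function.support fun ω => ENNReal.ofReal (clamp 1 g ω)) := measure_mono hsub
  exact ENNReal.toReal_pos hsupp.ne' (lintegral_clamp_lt_top 1 g).ne

lemma sup_integral_clamp {μ : Measure Ω} [IsProbabilityMeasure μ] {g : Ω → ℝ}
    (hg : Measurable g) (hpos : ∀ᵐ ω ∂μ, 0 < g ω)
    (htop : ∫⁻ ω, ENNReal.ofReal (g ω) ∂μ = ⊤) :
    ∀ R : ℝ, ∃ K : ℕ, R < ∫ ω, clamp K g ω ∂μ := by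
  have hmono : Monotone fun K : ℕ => fun ω => ENNReal.ofReal (clamp K g ω) := by
    intro K K' hKK' ω
    exact ENNReal.ofReal_le_ofReal (max_le_max le_rfl (min_le_min le_rfl (by exact_mod_cast hKK')))
  have hsup : ⨆ K : ℕ, ∫⁻ ω, ENNReal.ofReal (clamp K g ω) ∂μ = ⊤ := by
    rw [← lintegral_iSup (fun K => (clamp_measurable K hg).ennreal_ofReal) hmono]
    rw [← htop]
    refine lintegral_congr_ae ?_
    filter_upwards [hpos] with ω hω
    refine le_antisymm (iSup_le fun K => ENNReal.ofReal_le_ofReal (clamp_le K hω.le)) ?_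
    have hK0 : clamp ⌈g ω⌉₊ g ω = g ω := by
      rw [clamp, min_eq_left (Nat.le_ceil _), max_eq_right hω.le]
    calc ENNReal.ofReal (g ω) = ENNReal.ofReal (clamp ⌈g ω⌉₊ g ω) := by rw [hK0]
    _ ≤ ⨆ K : ℕ, ENNReal.ofReal (clamp K g ω) := le_iSup (fun K => ENNReal.ofReal (clamp K g ω)) _
  intro R
  rcases lt_or_ge R 0 with hR | hR
  · exact ⟨1, lt_of_lt_of_le hR (integral_nonneg (clamp_nonneg 1 g))⟩
  · have : ENNReal.ofReal R < ⨆ K : ℕ, ∫⁻ ω, ENNReal.ofReal (clamp K g ω) ∂μ := by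
      rw [hsup]; exact ENNReal.ofReal_lt_top
    obtain ⟨K, hK⟩ := lt_iSup_iff.1 this
    refine ⟨K, ?_⟩
    rw [integral_clamp_eq K hg]
    exact (ENNReal.ofReal_lt_iff_lt_toReal hR (lintegral_clamp_lt_top K g).ne).1 hK

section Det

lemma tendsto_halfdiv : Tendsto (fun n : ℕ => n / 2) atTop atTop :=
  tendsto_atTop_atTop.2 fun b => ⟨2 * b, fun n hn => by omega⟩

/-- From convergence of averages, eventual linear lower bound (with constant offset). -/
lemma evb {u : ℕ → ℝ} {I : ℝ} (hI : 0 < I)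
    (hT : Tendsto (fun n : ℕ => (∑ k ∈ Finset.range n, u k) / n) atTop (𝓝 I)) (c₀ : ℝ)
    {b : ℕ → ℝ} (hb : ∀ ℓ, (∑ k ∈ Finset.range (ℓ + 1), u k) - c₀ ≤ b ℓ) :
    ∀ᶠ ℓ : ℕ in atTop, (I / 2) * ℓ ≤ b ℓ := by
  have hshift : Tendsto (fun ℓ : ℕ => (∑ k ∈ Finset.range (ℓ + 1), u k) / ((ℓ + 1 : ℕ) : ℝ))
      atTop (𝓝 I) := by
    have := hT.comp (tendsto_add_atTop_nat 1)
    simpa [Function.comp_def] using this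
  have h1 := hshift.eventually (eventually_ge_nhds (show 3 * I / 4 < I by linarith))
  have h2 : ∀ᶠ ℓ : ℕ in atTop, c₀ ≤ (I / 4) * ℓ := by
    have : Tendsto (fun ℓ : ℕ => (I / 4) * ℓ) atTop atTop :=
      (tendsto_natCast_atTop_atTop (R := ℝ)).const_mul_atTop (by linarith)
    exact this.eventually_ge_atTop c₀
  filter_upwards [h1, h2] with ℓ h1 h2
  have hpos : (0:ℝ) < ((ℓ + 1 : ℕ) : ℝ) := by positivity
  rw [le_div_iff₀ hpos] at h1
  have hcast : ((ℓ + 1 : ℕ) : ℝ) = (ℓ : ℝ) + 1 := by push_cast; ring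
  rw [hcast] at h1
  have := hb ℓ
  have hℓ0 : (0:ℝ) ≤ (ℓ:ℝ) := Nat.cast_nonneg ℓ
  nlinarith

/-- From convergence of averages, eventual lower bound for sums over `[n/2, n)` (with shift). -/
lemma evA {u : ℕ → ℝ} {I : ℝ} (hI : 0 < I)
    (hT : Tendsto (fun n : ℕ => (∑ k ∈ Finset.range n, u k) / n) atTop (𝓝 I)) (j : ℕ)
    {a : ℕ → ℝ} (ha : ∀ n, (∑ k ∈ Finset.range (n + j), u k) - (∑ k ∈ Finset.range (n / 2 + j), u k)
      ≤ ∑ ℓ ∈ Finset.Ico (n / 2) n, a ℓ) :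
    ∀ᶠ n : ℕ in atTop, (I / 4) * n ≤ ∑ ℓ ∈ Finset.Ico (n / 2) n, a ℓ := by
  have hup : Tendsto (fun n : ℕ => (∑ k ∈ Finset.range (n + j), u k) / ((n + j : ℕ) : ℝ))
      atTop (𝓝 I) := by
    have := hT.comp (tendsto_add_atTop_nat j)
    simpa [Function.comp_def] using this
  have hdn : Tendsto (fun n : ℕ => (∑ k ∈ Finset.range (n / 2 + j), u k) / ((n / 2 + j : ℕ) : ℝ))
      atTop (𝓝 I) := by
    have h0 : Tendsto (fun n : ℕ => (∑ k ∈ Finset.range (n + j), u k) / ((n + j : ℕ) : ℝ))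
        atTop (𝓝 I) := hup
    have := h0.comp tendsto_halfdiv
    simpa [Function.comp_def] using this
  have h1 := hup.eventually (eventually_ge_nhds (show 7 * I / 8 < I by linarith))
  have h2 := hdn.eventually (eventually_le_nhds (show I < 9 * I / 8 by linarith))
  filter_upwards [h1, h2, eventually_ge_atTop (32 * j + 32)] with n h1 h2 hn
  have hjn : (0:ℝ) < ((n + j : ℕ) : ℝ) := by
    have : 0 < n + j := by omega
    exact_mod_cast this
  have hjd : (0:ℝ) < ((n / 2 + j : ℕ) : ℝ) := by
    have : 0 < n / 2 + j := by omega
    exact_mod_cast this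
  rw [le_div_iff₀ hjn] at h1
  rw [div_le_iff₀ hjd] at h2
  have hd1 : ((n / 2 : ℕ) : ℝ) ≤ (n : ℝ) / 2 := by
    have h' : 2 * (n / 2) ≤ n := by omega
    have := (Nat.cast_le (α := ℝ)).2 h'
    push_cast at this
    linarith
  have hd0 : (0:ℝ) ≤ ((n/2 : ℕ) : ℝ) := Nat.cast_nonneg _
  have hjcast : ((n + j : ℕ) : ℝ) = (n : ℝ) + (j : ℝ) := by push_cast; ring
  have hjcast2 : ((n / 2 + j : ℕ) : ℝ) = ((n/2 : ℕ) : ℝ) + (j : ℝ) := by push_cast; ring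
  rw [hjcast] at h1
  rw [hjcast2] at h2
  have hj0 : (0:ℝ) ≤ (j : ℝ) := Nat.cast_nonneg _
  have hnR : 32 * (j : ℝ) + 32 ≤ (n : ℝ) := by exact_mod_cast hn
  have := ha n
  nlinarith

/-- The key combination: from positive lower density of both factors. -/
lemma build_key {a b : ℕ → ℝ} {J₁ J₂ : ℕ → ℝ}
    (hb : ∀ K : ℕ, 0 < J₁ K → ∀ᶠ ℓ : ℕ in atTop, (J₁ K / 2) * ℓ ≤ b ℓ)
    (hA : ∀ K : ℕ, 0 < J₂ K →
      ∀ᶠ n : ℕ in atTop, (J₂ K / 4) * n ≤ ∑ ℓ ∈ Finset.Ico (n / 2) n, a ℓ)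
    (h1 : 0 < J₁ 1) (h2 : 0 < J₂ 1)
    (hbig : (∀ R : ℝ, ∃ K, R < J₁ K) ∨ (∀ R : ℝ, ∃ K, R < J₂ K)) (R : ℝ) :
    ∀ᶠ n : ℕ in atTop, R * (n : ℝ) ^ 2 ≤ b (n / 2) * ∑ ℓ ∈ Finset.Ico (n / 2) n, a ℓ := by
  obtain ⟨K₁, K₂, hK₁, hK₂, hprod⟩ :
      ∃ K₁ K₂, 0 < J₁ K₁ ∧ 0 < J₂ K₂ ∧ 32 * R ≤ J₁ K₁ * J₂ K₂ := by
    rcases hbig with hbig | hbig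
    · obtain ⟨K, hK⟩ := hbig (max 1 (32 * R / J₂ 1))
      refine ⟨K, 1, lt_of_lt_of_le (by norm_num) (le_of_lt (lt_of_le_of_lt (le_max_left _ _) hK)),
        h2, ?_⟩
      have hK1 : 32 * R / J₂ 1 ≤ J₁ K := le_of_lt (lt_of_le_of_lt (le_max_right _ _) hK)
      calc 32 * R = (32 * R / J₂ 1) * J₂ 1 := by field_simp
      _ ≤ J₁ K * J₂ 1 := mul_le_mul_of_nonneg_right hK1 h2.le
    · obtain ⟨K, hK⟩ := hbig (max 1 (32 * R / J₁ 1))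
      refine ⟨1, K, h1, lt_of_lt_of_le (by norm_num)
        (le_of_lt (lt_of_le_of_lt (le_max_left _ _) hK)), ?_⟩
      have hK1 : 32 * R / J₁ 1 ≤ J₂ K := le_of_lt (lt_of_le_of_lt (le_max_right _ _) hK)
      calc 32 * R = J₁ 1 * (32 * R / J₁ 1) := by field_simp
      _ ≤ J₁ 1 * J₂ K := mul_le_mul_of_nonneg_left hK1 h1.le
  have hbhalf : ∀ᶠ n : ℕ in atTop, (J₁ K₁ / 2) * ((n / 2 : ℕ) : ℝ) ≤ b (n / 2) :=
    tendsto_halfdiv.eventually (hb K₁ hK₁)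
  filter_upwards [hbhalf, hA K₂ hK₂, eventually_ge_atTop 2] with n hbn hAn hn2
  have hcast : (n : ℝ) ≤ 4 * ((n / 2 : ℕ) : ℝ) := by
    have h' : n ≤ 4 * (n / 2) := by omega
    exact_mod_cast h'
  have hn0 : (0:ℝ) ≤ (n : ℝ) := Nat.cast_nonneg _
  have hb' : (J₁ K₁ / 8) * (n : ℝ) ≤ b (n / 2) := by nlinarith
  have hbn0 : (0:ℝ) ≤ b (n / 2) := le_trans (by positivity) hb'
  calc R * (n:ℝ)^2 ≤ (J₁ K₁ / 8 * n) * (J₂ K₂ / 4 * n) := by nlinarith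
  _ ≤ b (n / 2) * ∑ ℓ ∈ Finset.Ico (n / 2) n, a ℓ :=
      mul_le_mul hb' hAn (by positivity) hbn0

/-- Deterministic superquadratic growth lemma. -/
lemma det {a b : ℕ → ℝ} (ha : ∀ n, 0 ≤ a n) (hb0 : ∀ n, 0 ≤ b n) (hbmono : Monotone b)
    (key : ∀ R : ℝ, ∀ᶠ n : ℕ in atTop,
      R * (n : ℝ) ^ 2 ≤ b (n / 2) * ∑ ℓ ∈ Finset.Ico (n / 2) n, a ℓ) :
    Tendsto (fun n : ℕ => (∑ ℓ ∈ Finset.range n, a ℓ * b ℓ) / (n : ℝ) ^ 2) atTop atTop := by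
  rw [tendsto_atTop]
  intro R
  filter_upwards [key R, eventually_ge_atTop 1] with n hn hn1
  have hn0 : (0:ℝ) < (n:ℝ)^2 := by
    have : (0:ℝ) < (n:ℝ) := by exact_mod_cast hn1
    positivity
  rw [le_div_iff₀ hn0]
  calc R * (n:ℝ)^2 ≤ b (n / 2) * ∑ ℓ ∈ Finset.Ico (n / 2) n, a ℓ := hn
  _ = ∑ ℓ ∈ Finset.Ico (n / 2) n, b (n / 2) * a ℓ := Finset.mul_sum _ _ _
  _ ≤ ∑ ℓ ∈ Finset.Ico (n / 2) n, a ℓ * b ℓ := by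
      refine Finset.sum_le_sum fun ℓ hℓ => ?_
      rw [mul_comm]
      exact mul_le_mul_of_nonneg_left (hbmono (Finset.mem_Ico.1 hℓ).1) (ha ℓ)
  _ ≤ ∑ ℓ ∈ Finset.range n, a ℓ * b ℓ := by
      refine Finset.sum_le_sum_of_subset_of_nonneg ?_ fun i _ _ => mul_nonneg (ha i) (hb0 i)
      intro x hx
      exact Finset.mem_range.2 (Finset.mem_Ico.1 hx).2

end Det

end ET3

open Finset Filter MeasureTheory

theorem stmt_3 {Ω : Type*} [MeasurableSpace Ω] (μ : Measure Ω) [IsProbabilityMeasure μ]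
    (T : Ω ≃ᵐ Ω) (hT : Ergodic T μ)
    (c : Ω → ℝ) (hcmeas : Measurable c) (hc : ∀ᵐ ω ∂μ, 0 < c ω)
    (cbar : Ω → ℝ) (hcbar : ∀ ω, cbar ω = c ω + c (T.symm ω))
    (hdiv : (∫⁻ ω, ENNReal.ofReal (c ω) ∂μ) = ⊤ ∨
            (∫⁻ ω, ENNReal.ofReal (c ω)⁻¹ ∂μ) = ⊤)
    (f : Ω → ℤ → ℝ)
    (hf0 : ∀ ω, f ω 0 = 0)
    (hfpos : ∀ ω, ∀ m : ℤ, 1 ≤ m →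
      f ω m = ∑ ℓ ∈ Finset.range m.toNat,
        (c (T^[ℓ] ω))⁻¹ * ∑ k ∈ Finset.Icc 1 ℓ, cbar (T^[k] ω))
    (hfneg : ∀ ω, ∀ m : ℤ, m ≤ -1 →
      f ω m = ∑ ℓ ∈ Finset.Icc 1 (-m).toNat,
        (c (T.symm^[ℓ] ω))⁻¹ * ∑ k ∈ Finset.range ℓ, cbar (T.symm^[k] ω)) :
    ∀ᵐ ω ∂μ,
      Tendsto (fun m : ℤ => f ω m / (m : ℝ) ^ 2) atTop atTop ∧
      Tendsto (fun m : ℤ => f ω m / (m : ℝ) ^ 2) atBot atTop := by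
  classical
  have hcinvm : Measurable fun ω => (c ω)⁻¹ := hcmeas.inv
  have hcinvpos : ∀ᵐ ω ∂μ, 0 < (c ω)⁻¹ := hc.mono fun ω h => inv_pos.2 h
  have hTm : MeasurePreserving T μ μ := hT.toMeasurePreserving
  have hTsm : MeasurePreserving T.symm μ μ := MeasurePreserving.symm T hTm
  have hTse : Ergodic T.symm μ := ET3.ergodic_symm T hT
  set J1 : ℕ → ℝ := fun K => ∫ ω, ET3.clamp K c ω ∂μ with hJ1
  set J2 : ℕ → ℝ := fun K => ∫ ω, ET3.clamp K (fun x => (c x)⁻¹) ω ∂μ with hJ2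
  have hJ1pos : 0 < J1 1 := ET3.pos_integral_clamp hcmeas hc
  have hJ2pos : 0 < J2 1 := ET3.pos_integral_clamp hcinvm hcinvpos
  have hbig : (∀ R : ℝ, ∃ K, R < J1 K) ∨ (∀ R : ℝ, ∃ K, R < J2 K) := by
    rcases hdiv with h | h
    · exact Or.inl (ET3.sup_integral_clamp hcmeas hc h)
    · exact Or.inr (ET3.sup_integral_clamp hcinvm hcinvpos h)
  have A1 : ∀ᵐ ω ∂μ, ∀ K : ℕ,
      Tendsto (fun n : ℕ => ET3.bS T (ET3.clamp K c) n ω / n) atTop (𝓝 (J1 K)) :=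
    ae_all_iff.2 fun K =>
      ET3.ae_tendsto_birkhoff hT (ET3.clamp_measurable K hcmeas) K (ET3.clamp_abs K c)
  have A2 : ∀ᵐ ω ∂μ, ∀ K : ℕ,
      Tendsto (fun n : ℕ => ET3.bS T (ET3.clamp K (fun x => (c x)⁻¹)) n ω / n) atTop
        (𝓝 (J2 K)) :=
    ae_all_iff.2 fun K =>
      ET3.ae_tendsto_birkhoff hT (ET3.clamp_measurable K hcinvm) K (ET3.clamp_abs K _)
  have A3 : ∀ᵐ ω ∂μ, ∀ K : ℕ,
      Tendsto (fun n : ℕ => ET3.bS T.symm (ET3.clamp K c) n ω / n) atTop (𝓝 (J1 K)) :=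
    ae_all_iff.2 fun K =>
      ET3.ae_tendsto_birkhoff hTse (ET3.clamp_measurable K hcmeas) K (ET3.clamp_abs K c)
  have A4 : ∀ᵐ ω ∂μ, ∀ K : ℕ,
      Tendsto (fun n : ℕ => ET3.bS T.symm (ET3.clamp K (fun x => (c x)⁻¹)) n ω / n) atTop
        (𝓝 (J2 K)) :=
    ae_all_iff.2 fun K =>
      ET3.ae_tendsto_birkhoff hTse (ET3.clamp_measurable K hcinvm) K (ET3.clamp_abs K _)
  have Q : ∀ᵐ ω ∂μ, ∀ k : ℕ, 0 < c (T^[k] ω) ∧ 0 < c (T.symm^[k] ω) := by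
    rw [ae_all_iff]
    intro k
    have hms : MeasurableSet {x | 0 < c x} := measurableSet_lt measurable_const hcmeas
    exact (ET3.ae_comp (hTm.iterate k) hms hc).and (ET3.ae_comp (hTsm.iterate k) hms hc)
  filter_upwards [A1, A2, A3, A4, Q] with ω hA1 hA2 hA3 hA4 hQ
  have hsymT : ∀ k : ℕ, T.symm (T^[k + 1] ω) = T^[k] ω := fun k => by
    rw [Function.iterate_succ_apply']; exact T.symm_apply_apply _
  have hsymS : ∀ k : ℕ, T.symm (T.symm^[k] ω) = T.symm^[k + 1] ω := fun k =>
    (Function.iterate_succ_apply' T.symm k ω).symm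
  constructor
  · -- positive direction
    set aP : ℕ → ℝ := fun ℓ => (c (T^[ℓ] ω))⁻¹ with haP
    set bP : ℕ → ℝ := fun ℓ => ∑ k ∈ Finset.Icc 1 ℓ, cbar (T^[k] ω) with hbP
    have haP0 : ∀ ℓ, 0 ≤ aP ℓ := fun ℓ => inv_nonneg.2 (hQ ℓ).1.le
    have hcbarP : ∀ k : ℕ, 1 ≤ k → c (T^[k] ω) ≤ cbar (T^[k] ω) ∧ 0 ≤ cbar (T^[k] ω) := by
      intro k hk
      obtain ⟨j, rfl⟩ : ∃ j, k = j + 1 := ⟨k - 1, by omega⟩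
      rw [hcbar, hsymT j]
      exact ⟨by linarith [(hQ j).1], by linarith [(hQ j).1, (hQ (j + 1)).1]⟩
    have hbP0 : ∀ ℓ, 0 ≤ bP ℓ := fun ℓ =>
      Finset.sum_nonneg fun k hk => (hcbarP k (Finset.mem_Icc.1 hk).1).2
    have hbPmono : Monotone bP := fun ℓ ℓ' h =>
      Finset.sum_le_sum_of_subset_of_nonneg (Finset.Icc_subset_Icc_right h)
        (fun k hk _ => (hcbarP k (Finset.mem_Icc.1 hk).1).2)
    have hbK : ∀ K : ℕ, 0 < J1 K → ∀ᶠ ℓ : ℕ in atTop, (J1 K / 2) * ℓ ≤ bP ℓ := by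
      intro K hK
      refine ET3.evb (u := fun k => ET3.clamp K c (T^[k] ω)) hK (hA1 K) (ET3.clamp K c ω)
        (fun ℓ => ?_)
      have h1 : (∑ k ∈ Finset.range (ℓ + 1), ET3.clamp K c (T^[k] ω)) - ET3.clamp K c ω
          = ∑ k ∈ Finset.Ico 1 (ℓ + 1), ET3.clamp K c (T^[k] ω) := by
        rw [Finset.sum_Ico_eq_sub _ (by omega : 1 ≤ ℓ + 1), Finset.sum_range_one,
          Function.iterate_zero_apply]
      rw [h1, Finset.Ico_add_one_right_eq_Icc]
      refine Finset.sum_le_sum fun k hk => ?_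
      have hk1 := (Finset.mem_Icc.1 hk).1
      calc ET3.clamp K c (T^[k] ω) ≤ c (T^[k] ω) := ET3.clamp_le K (hQ k).1.le
      _ ≤ cbar (T^[k] ω) := (hcbarP k hk1).1
    have hAK : ∀ K : ℕ, 0 < J2 K →
        ∀ᶠ n : ℕ in atTop, (J2 K / 4) * n ≤ ∑ ℓ ∈ Finset.Ico (n / 2) n, aP ℓ := by
      intro K hK
      refine ET3.evA (u := fun k => ET3.clamp K (fun x => (c x)⁻¹) (T^[k] ω)) hK (hA2 K) 0
        (fun n => ?_)
      simp only [Nat.add_zero]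
      rw [← Finset.sum_Ico_eq_sub _ (Nat.div_le_self n 2)]
      refine Finset.sum_le_sum fun ℓ _ => ?_
      exact ET3.clamp_le K (inv_nonneg.2 (hQ ℓ).1.le)
    have keyP := ET3.build_key hbK hAK hJ1pos hJ2pos hbig
    have detP := ET3.det haP0 hbP0 hbPmono keyP
    have htoNat : Tendsto (fun m : ℤ => m.toNat) atTop atTop :=
      tendsto_atTop_atTop.2 fun b => ⟨(b : ℤ), fun m hm => by omega⟩
    refine Tendsto.congr' ?_ (detP.comp htoNat)
    filter_upwards [eventually_ge_atTop (1 : ℤ)] with m hm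
    have hmc : ((m.toNat : ℕ) : ℝ) = (m : ℝ) := by exact_mod_cast Int.toNat_of_nonneg (by omega)
    simp only [Function.comp_apply]
    rw [hfpos ω m hm, hmc]
  · -- negative direction
    set aN : ℕ → ℝ := fun j => (c (T.symm^[j + 1] ω))⁻¹ with haN
    set bN : ℕ → ℝ := fun j => ∑ k ∈ Finset.range (j + 1), cbar (T.symm^[k] ω) with hbN
    have hcbarN : ∀ k : ℕ, c (T.symm^[k] ω) ≤ cbar (T.symm^[k] ω) ∧ 0 ≤ cbar (T.symm^[k] ω) := by
      intro k
      rw [hcbar, hsymS k]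
      exact ⟨by linarith [(hQ (k + 1)).2], by linarith [(hQ k).2, (hQ (k + 1)).2]⟩
    have haN0 : ∀ j, 0 ≤ aN j := fun j => inv_nonneg.2 (hQ (j + 1)).2.le
    have hbN0 : ∀ j, 0 ≤ bN j := fun j => Finset.sum_nonneg fun k _ => (hcbarN k).2
    have hbNmono : Monotone bN := fun j j' h =>
      Finset.sum_le_sum_of_subset_of_nonneg (Finset.range_subset_range.2 (by omega))
        (fun k _ _ => (hcbarN k).2)
    have hbK : ∀ K : ℕ, 0 < J1 K → ∀ᶠ j : ℕ in atTop, (J1 K / 2) * j ≤ bN j := by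
      intro K hK
      refine ET3.evb (u := fun k => ET3.clamp K c (T.symm^[k] ω)) hK (hA3 K) 0 (fun j => ?_)
      rw [sub_zero]
      refine Finset.sum_le_sum fun k _ => ?_
      calc ET3.clamp K c (T.symm^[k] ω) ≤ c (T.symm^[k] ω) := ET3.clamp_le K (hQ k).2.le
      _ ≤ cbar (T.symm^[k] ω) := (hcbarN k).1
    have hAK : ∀ K : ℕ, 0 < J2 K →
        ∀ᶠ n : ℕ in atTop, (J2 K / 4) * n ≤ ∑ ℓ ∈ Finset.Ico (n / 2) n, aN ℓ := by
      intro K hK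
      refine ET3.evA (u := fun k => ET3.clamp K (fun x => (c x)⁻¹) (T.symm^[k] ω)) hK (hA4 K) 1
        (fun n => ?_)
      rw [← Finset.sum_Ico_eq_sub _ (by omega : n / 2 + 1 ≤ n + 1)]
      have hre : ∑ i ∈ Finset.Ico (n / 2 + 1) (n + 1),
            ET3.clamp K (fun x => (c x)⁻¹) (T.symm^[i] ω)
          = ∑ ℓ ∈ Finset.Ico (n / 2) n, ET3.clamp K (fun x => (c x)⁻¹) (T.symm^[ℓ + 1] ω) := by
        rw [Finset.sum_Ico_eq_sum_range, Finset.sum_Ico_eq_sum_range]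
        have hcard : n + 1 - (n / 2 + 1) = n - n / 2 := by omega
        rw [hcard]
        refine Finset.sum_congr rfl fun i _ => ?_
        rw [show n / 2 + 1 + i = n / 2 + i + 1 by omega]
      rw [hre]
      refine Finset.sum_le_sum fun ℓ _ => ?_
      exact ET3.clamp_le K (inv_nonneg.2 (hQ (ℓ + 1)).2.le)
    have keyN := ET3.build_key hbK hAK hJ1pos hJ2pos hbig
    have detN := ET3.det haN0 hbN0 hbNmono keyN
    have htoNat : Tendsto (fun m : ℤ => (-m).toNat) atBot atTop :=
      tendsto_atBot_atTop.2 fun b => ⟨-(b : ℤ), fun m hm => by omega⟩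
    refine Tendsto.congr' ?_ (detN.comp htoNat)
    filter_upwards [eventually_le_atBot (-1 : ℤ)] with m hm
    have hmc : (((-m).toNat : ℕ) : ℝ) = -(m : ℝ) := by
      exact_mod_cast Int.toNat_of_nonneg (by omega)
    simp only [Function.comp_apply]
    rw [hfneg ω m hm]
    have hrein : ∑ ℓ ∈ Finset.Icc 1 (-m).toNat,
          (c (T.symm^[ℓ] ω))⁻¹ * ∑ k ∈ Finset.range ℓ, cbar (T.symm^[k] ω)
        = ∑ j ∈ Finset.range (-m).toNat, aN j * bN j := by
      rw [← Finset.Ico_add_one_right_eq_Icc, Finset.sum_Ico_eq_sum_range]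
      have hcard : (-m).toNat + 1 - 1 = (-m).toNat := by omega
      rw [hcard]
      refine Finset.sum_congr rfl fun i _ => ?_
      rw [show 1 + i = i + 1 by omega]
    rw [hrein, hmc, neg_sq]
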